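/- For α > 2 with ⌊α⌋ even and α ∉ ℕ, the integral identity ∫_0^∞ s^{α−1}/(s^{2α} − 2 s^α cos(απ) + 1) ds = π(⌈α⌉ − α)/(α sin(απ)) holds. -/

import Mathlib

open Real MeasureTheory Set

lemma aux_integral_sq (θ : ℝ) (h1 : 0 < θ) (h2 : θ < Real.pi) :
    ∫ t in Set.Ioi (0 : ℝ), 1 / ((t - Real.cos θ) ^ 2 + Real.sin θ ^ 2) =
      (Real.pi - θ) / Real.sin θ := by
  have hs : 0 < Real.sin θ := Real.sin_pos_of_pos_of_lt_pi h1 h2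
  set s := Real.sin θ with hsdef
  set c := Real.cos θ with hcdef
  have hF : ∀ t : ℝ, HasDerivAt (fun t => Real.arctan ((t - c) / s) / s)
      (1 / ((t - c) ^ 2 + s ^ 2)) t := by
    intro t
    have h1' : HasDerivAt (fun t : ℝ => (t - c) / s) (1 / s) t := by
      simpa using ((hasDerivAt_id t).sub_const c).div_const s
    have h2' := (Real.hasDerivAt_arctan ((t - c) / s)).comp t h1'
    have := h2'.div_const s
    refine this.congr_deriv ?_
    field_simp
    ring
  have hlim : Filter.Tendsto (fun t : ℝ => Real.arctan ((t - c) / s) / s)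
      Filter.atTop (nhds ((Real.pi / 2) / s)) := by
    apply Filter.Tendsto.div_const
    apply Filter.Tendsto.comp (Real.tendsto_arctan_atTop.mono_right nhdsWithin_le_nhds)
    apply Filter.Tendsto.atTop_div_const hs
    exact Filter.tendsto_atTop_add_const_right _ _ Filter.tendsto_id
  have := integral_Ioi_of_hasDerivAt_of_nonneg (a := 0)
    (g := fun t => Real.arctan ((t - c) / s) / s)
    (g' := fun t => 1 / ((t - c) ^ 2 + s ^ 2))
    ((hF 0).continuousAt.continuousWithinAt)
    (fun x _ => hF x)
    (fun x _ => by positivity) hlim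
  rw [this]
  have harc : Real.arctan (c / s) = Real.pi / 2 - θ := by
    have ht : Real.tan (Real.pi / 2 - θ) = c / s := by
      rw [Real.tan_eq_sin_div_cos, Real.sin_pi_div_two_sub, Real.cos_pi_div_two_sub]
    rw [← ht, Real.arctan_tan] <;> linarith [Real.pi_pos]
  simp only [zero_sub, neg_div, Real.arctan_neg, harc]
  field_simp
  ring

lemma aux_integral_quad (θ : ℝ) (h1 : 0 < θ) (h2 : θ < Real.pi) :
    ∫ t in Set.Ioi (0 : ℝ), 1 / (t ^ 2 - 2 * t * Real.cos θ + 1) =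
      (Real.pi - θ) / Real.sin θ := by
  have key : ∀ t : ℝ, t ^ 2 - 2 * t * Real.cos θ + 1 =
      (t - Real.cos θ) ^ 2 + Real.sin θ ^ 2 := by
    intro t
    have := Real.sin_sq_add_cos_sq θ
    nlinarith [this]
  simp_rw [key]
  exact aux_integral_sq θ h1 h2

theorem integral_identity_one (α : ℝ) (hα : 2 < α) (heven : Even ⌊α⌋)
    (hnot : ∀ n : ℕ, α ≠ n) :
    ∫ s in Set.Ioi (0 : ℝ),
        s ^ (α - 1) / (s ^ (2 * α) - 2 * s ^ α * Real.cos (α * Real.pi) + 1) =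
      Real.pi * ((⌈α⌉ : ℝ) - α) / (α * Real.sin (α * Real.pi)) := by
  have hα0 : 0 < α := by linarith
  obtain ⟨m, hm⟩ := heven
  have hfloor : (2 : ℝ) ≤ ⌊α⌋ := by
    exact_mod_cast Int.le_floor.mpr (by exact_mod_cast hα.le)
  have hne : α ≠ (⌊α⌋ : ℝ) := by
    intro h
    have h0 : (0 : ℤ) ≤ ⌊α⌋ := by exact_mod_cast (by linarith : (0:ℝ) ≤ (⌊α⌋:ℝ))
    have h1 : ((⌊α⌋.toNat : ℕ) : ℝ) = (⌊α⌋ : ℝ) := by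
      exact_mod_cast congrArg (Int.cast : ℤ → ℝ) (Int.toNat_of_nonneg h0)
    exact hnot ⌊α⌋.toNat (h.trans h1.symm)
  have hfr0 : 0 < Int.fract α := Int.fract_pos.mpr hne
  have hfr1 : Int.fract α < 1 := Int.fract_lt_one α
  set θ := Int.fract α * Real.pi with hθdef
  have hθ0 : 0 < θ := mul_pos hfr0 Real.pi_pos
  have hθπ : θ < Real.pi := by nlinarith [Real.pi_pos]
  have hαπ : α * Real.pi = θ + m * (2 * Real.pi) := by
    have h := Int.floor_add_fract α
    have hm' : (⌊α⌋ : ℝ) = (m : ℝ) + (m : ℝ) := by exact_mod_cast congrArg (Int.cast : ℤ → ℝ) hm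
    rw [hθdef]
    nlinarith [h, hm']
  have hcos : Real.cos (α * Real.pi) = Real.cos θ := by
    rw [hαπ, Real.cos_add_int_mul_two_pi]
  have hsin : Real.sin (α * Real.pi) = Real.sin θ := by
    rw [hαπ, Real.sin_add_int_mul_two_pi]
  have hsθ : 0 < Real.sin θ := Real.sin_pos_of_pos_of_lt_pi hθ0 hθπ
  have hceil : (⌈α⌉ : ℝ) = (⌊α⌋ : ℝ) + 1 := by
    have : ⌈α⌉ = ⌊α⌋ + 1 := by
      rw [Int.ceil_eq_iff]
      constructor
      · push_cast
        have := Int.floor_le α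
        rcases lt_or_eq_of_le this with h | h
        · linarith
        · exact absurd h.symm hne
      · push_cast
        linarith [Int.lt_floor_add_one α]
    exact_mod_cast this
  set g : ℝ → ℝ := fun t => 1 / (t ^ 2 - 2 * t * Real.cos θ + 1) with hgdef
  have hsub : ∫ x in Set.Ioi (0:ℝ), (α * x ^ (α - 1)) • g (x ^ α) = ∫ y in Set.Ioi (0:ℝ), g y :=
    integral_comp_rpow_Ioi_of_pos hα0
  have hcongr : ∫ s in Set.Ioi (0 : ℝ),
      s ^ (α - 1) / (s ^ (2 * α) - 2 * s ^ α * Real.cos (α * Real.pi) + 1) =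
      ∫ x in Set.Ioi (0:ℝ), (1 / α) * ((α * x ^ (α - 1)) • g (x ^ α)) := by
    apply setIntegral_congr_fun measurableSet_Ioi
    intro x hx
    have hx0 : (0 : ℝ) < x := hx
    have hpow : x ^ (2 * α) = (x ^ α) ^ 2 := by
      rw [two_mul, Real.rpow_add hx0, sq]
    have hxα : 0 < x ^ α := Real.rpow_pos_of_pos hx0 α
    have hden : (x ^ α) ^ 2 - 2 * (x ^ α) * Real.cos θ + 1 ≠ 0 := by
      have h1 := Real.sin_sq_add_cos_sq θ
      nlinarith [sq_nonneg (x ^ α - Real.cos θ), hsθ]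
    simp only [smul_eq_mul, hgdef, hcos, hpow]
    field_simp
  rw [hcongr]
  simp_rw [smul_eq_mul]
  simp_rw [smul_eq_mul] at hsub
  rw [MeasureTheory.integral_const_mul, hsub,
    aux_integral_quad θ hθ0 hθπ, hsin, hceil]
  have hfr : Int.fract α = α - (⌊α⌋ : ℝ) := rfl
  rw [hθdef]
  field_simp
  rw [hfr]
  ring
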